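/- Theorem 5 (lower bound on penalized regret for online kernel regression, matrix/strategy form): Let T ≥ 2, let K be a T×T real symmetric positive semidefinite matrix, let a > 0, let κ² = max_i K_{ii}, and set B = √(6(1 + κ²/a)·log T). Let a prediction strategy be given by measurable maps σ_t : ℝ^{t−1} → ℝ for t = 1,…,T, so that on a label sequence y ∈ ℝ^T the learner's prediction at round t is ŷ_t = σ_t(y_1,…,y_{t−1}). Then there exists y ∈ ℝ^T with |y_i| ≤ B for all i such that ∑_{t=1}^T (ŷ_t − y_t)² − inf_{α ∈ ℝ^T} ( ‖y − Kα‖² + a·αᵀKα ) ≥ log det(I + a⁻¹K) + 2·log(1 − 1/T). -/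

import Mathlib

open Matrix MeasureTheory


lemma log_le_key (T : ℕ) (hT : 2 ≤ T) (a : ℝ) (ha : 0 < a) (c : ℝ) (hc : 0 ≤ c)
    (l : ℝ) (hl : 0 ≤ l) (hlT : l ≤ T * (c * a)) :
    Real.log (1 + l / a) ≤ (6 * (1 + c) * Real.log T) * (l / (a + l)) := by
  have hT2 : (2:ℝ) ≤ (T:ℝ) := by exact_mod_cast hT
  have hlogT : Real.log 2 ≤ Real.log T := Real.log_le_log (by norm_num) hT2
  have hlog2 : (0.6931:ℝ) ≤ Real.log 2 := by
    have := Real.log_two_gt_d9; linarith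
  have hlogT0 : (0.6931:ℝ) ≤ Real.log T := le_trans hlog2 hlogT
  have hal : 0 < a + l := by linarith
  rcases le_or_gt l a with h | h
  · -- small case
    have h1 : Real.log (1 + l / a) ≤ l / a := by
      have := Real.log_le_sub_one_of_pos (show 0 < 1 + l/a by positivity)
      simpa using this
    have h2 : l / a ≤ 2 * (l / (a + l)) := by
      rw [show 2 * (l / (a+l)) = (2*l)/(a+l) by ring, div_le_div_iff₀ ha hal]
      nlinarith
    have h6 : 2 * (l / (a + l)) ≤ (6 * (1 + c) * Real.log T) * (l / (a + l)) := by
      apply mul_le_mul_of_nonneg_right _ (by positivity)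
      nlinarith
    linarith
  · -- large case
    have h3 : (1:ℝ)/2 ≤ l / (a + l) := by
      rw [div_le_div_iff₀ (by norm_num) hal]; linarith
    have h4 : Real.log (1 + l / a) ≤ Real.log T + c := by
      have hla : 1 + l / a ≤ (T:ℝ) * (1 + c) := by
        have h0 : l / a ≤ T * c := by rw [div_le_iff₀ ha]; linarith [hlT]
        nlinarith [h0, hT2, hc]
      calc Real.log (1 + l / a) ≤ Real.log ((T:ℝ) * (1 + c)) :=
            Real.log_le_log (by positivity) hla
        _ = Real.log T + Real.log (1 + c) := by
            rw [Real.log_mul (by positivity) (by positivity)]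
        _ ≤ Real.log T + c := by
            have := Real.log_le_sub_one_of_pos (show (0:ℝ) < 1 + c by positivity)
            simpa using this
    have h5 : Real.log T + c ≤ 3 * (1 + c) * Real.log T := by nlinarith
    calc Real.log (1 + l / a) ≤ 3 * (1 + c) * Real.log T := le_trans h4 h5
      _ = (6 * (1 + c) * Real.log T) * (1/2) := by ring
      _ ≤ (6 * (1 + c) * Real.log T) * (l / (a + l)) := by
          apply mul_le_mul_of_nonneg_left h3; positivity

-- sign-vector combinatorics
section Signs
variable {T : ℕ} (B : ℝ)

noncomputable def ys (B : ℝ) (s : Fin T → Bool) : Fin T → ℝ := fun i => if s i then B else -B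

noncomputable def flipE (t : Fin T) : Equiv.Perm (Fin T → Bool) :=
  Function.Involutive.toPerm (fun s => Function.update s t (!(s t)))
    (by
      intro s
      funext j
      rcases eq_or_ne j t with rfl | hj
      · simp
      · simp [Function.update_of_ne hj])

lemma flipE_apply (t : Fin T) (s : Fin T → Bool) :
    flipE t s = Function.update s t (!(s t)) := rfl

lemma ys_flip_self (t : Fin T) (s : Fin T → Bool) :
    ys B (flipE t s) t = -(ys B s t) := by
  rcases h : s t with _ | _ <;> simp [ys, flipE_apply, h]

lemma ys_flip_ne (t : Fin T) (s : Fin T → Bool) (j : Fin T) (hj : j ≠ t) :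
    ys B (flipE t s) j = ys B s j := by
  simp [ys, flipE_apply, Function.update_of_ne hj]

lemma sum_ys_mul (i j : Fin T) (hij : i ≠ j) :
    ∑ s : Fin T → Bool, ys B s i * ys B s j = 0 := by
  have h := Equiv.sum_comp (flipE i) (fun s => ys B s i * ys B s j)
  have h2 : ∀ s : Fin T → Bool, ys B (flipE i s) i * ys B (flipE i s) j
      = -(ys B s i * ys B s j) := by
    intro s
    rw [ys_flip_self, ys_flip_ne B i s j (Ne.symm hij)]
    ring
  rw [Finset.sum_congr rfl (fun s _ => h2 s)] at h
  rw [Finset.sum_neg_distrib] at h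
  linarith

lemma sum_ys_sq (i : Fin T) :
    ∑ s : Fin T → Bool, ys B s i * ys B s i
      = (Fintype.card (Fin T → Bool) : ℝ) * B ^ 2 := by
  have : ∀ s : Fin T → Bool, ys B s i * ys B s i = B ^ 2 := by
    intro s; rcases h : s i with _ | _ <;> simp [ys, h] <;> ring
  rw [Finset.sum_congr rfl (fun s _ => this s), Finset.sum_const, Finset.card_univ,
    nsmul_eq_mul]
end Signs

section Loss
variable {T : ℕ}

lemma sum_loss_ge (B : ℝ) (hB0 : 0 ≤ B) (σ : ∀ t : Fin T, (Fin (t : ℕ) → ℝ) → ℝ) :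
    (Fintype.card (Fin T → Bool) : ℝ) * ((T : ℝ) * B ^ 2) ≤
      ∑ s : Fin T → Bool, ∑ t : Fin T,
        (σ t (fun i => ys B s (Fin.castLE t.isLt.le i)) - ys B s t) ^ 2 := by
  rw [Finset.sum_comm]
  have key : ∀ t : Fin T,
      (Fintype.card (Fin T → Bool) : ℝ) * B ^ 2 ≤
        ∑ s : Fin T → Bool,
          (σ t (fun i => ys B s (Fin.castLE t.isLt.le i)) - ys B s t) ^ 2 := by
    intro t
    set f : (Fin T → Bool) → ℝ :=
      fun s => (σ t (fun i => ys B s (Fin.castLE t.isLt.le i)) - ys B s t) ^ 2 with hf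
    have hflip : ∀ s, f (flipE t s) =
        (σ t (fun i => ys B s (Fin.castLE t.isLt.le i)) + ys B s t) ^ 2 := by
      intro s
      have hp : (fun i => ys B (flipE t s) (Fin.castLE t.isLt.le i))
          = (fun i => ys B s (Fin.castLE t.isLt.le i)) := by
        funext i
        apply ys_flip_ne
        intro hEq
        have h1 : (i : ℕ) < (t : ℕ) := i.isLt
        have h2 := congrArg Fin.val hEq
        simp only [Fin.coe_castLE] at h2
        omega
      simp only [hf]
      simp only [hp, ys_flip_self]
      ring
    have h := Equiv.sum_comp (flipE t) f
    have hsum : 2 * ∑ s : Fin T → Bool, f s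
        = ∑ s : Fin T → Bool, (f s + f (flipE t s)) := by
      rw [Finset.sum_add_distrib, h]; ring
    have hterm : ∀ s : Fin T → Bool, 2 * B ^ 2 ≤ f s + f (flipE t s) := by
      intro s
      rw [hflip, hf]
      beta_reduce
      have hv : (ys B s t) ^ 2 = B ^ 2 := by
        rcases h : s t with _ | _ <;> simp [ys, h] <;> ring
      nlinarith [sq_nonneg (σ t (fun i => ys B s (Fin.castLE t.isLt.le i)))]
    have : (Fintype.card (Fin T → Bool) : ℝ) * (2 * B ^ 2)
        ≤ ∑ s : Fin T → Bool, (f s + f (flipE t s)) := by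
      rw [← Finset.card_univ, ← nsmul_eq_mul]
      exact Finset.card_nsmul_le_sum _ _ _ (fun s _ => hterm s)
    rw [← hsum] at this
    linarith
  calc (Fintype.card (Fin T → Bool) : ℝ) * ((T : ℝ) * B ^ 2)
      = ∑ _t : Fin T, (Fintype.card (Fin T → Bool) : ℝ) * B ^ 2 := by
        rw [Finset.sum_const, Finset.card_univ, Fintype.card_fin, nsmul_eq_mul]; ring
    _ ≤ _ := Finset.sum_le_sum (fun t _ => key t)

lemma sum_quad (B : ℝ) (M : Matrix (Fin T) (Fin T) ℝ) :
    ∑ s : Fin T → Bool, (M *ᵥ ys B s) ⬝ᵥ ys B s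
      = (Fintype.card (Fin T → Bool) : ℝ) * (B ^ 2 * M.trace) := by
  have expand : ∀ s : Fin T → Bool, (M *ᵥ ys B s) ⬝ᵥ ys B s
      = ∑ i : Fin T, ∑ j : Fin T, M i j * (ys B s j * ys B s i) := by
    intro s
    simp only [dotProduct, mulVec, dotProduct]
    refine Finset.sum_congr rfl (fun i _ => ?_)
    rw [Finset.sum_mul]
    refine Finset.sum_congr rfl (fun j _ => ?_)
    ring
  rw [Finset.sum_congr rfl (fun s _ => expand s), Finset.sum_comm]
  have : ∀ i : Fin T, ∑ s : Fin T → Bool, ∑ j : Fin T, M i j * (ys B s j * ys B s i)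
      = (Fintype.card (Fin T → Bool) : ℝ) * (B ^ 2 * M i i) := by
    intro i
    rw [Finset.sum_comm]
    have hj : ∀ j : Fin T, ∑ s : Fin T → Bool, M i j * (ys B s j * ys B s i)
        = M i j * ∑ s : Fin T → Bool, ys B s j * ys B s i := by
      intro j; rw [Finset.mul_sum]
    rw [Finset.sum_congr rfl (fun j _ => hj j)]
    rw [Finset.sum_eq_single i]
    · rw [sum_ys_sq]; ring
    · intro j _ hji
      rw [sum_ys_mul B j i hji, mul_zero]
    · intro h; exact absurd (Finset.mem_univ i) h
  rw [Finset.sum_congr rfl (fun i _ => this i), ← Finset.mul_sum, Matrix.trace]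
  simp only [Matrix.diag]
  rw [← Finset.mul_sum]

end Loss

lemma spectral_pack (T : ℕ) (K : Matrix (Fin T) (Fin T) ℝ) (hK : K.PosSemidef)
    (a : ℝ) (ha : 0 < a) :
    ∃ (l : Fin T → ℝ) (M : Matrix (Fin T) (Fin T) ℝ),
      (∀ i, 0 ≤ l i) ∧ (∑ i, l i = K.trace) ∧
      ((1 + a⁻¹ • K : Matrix (Fin T) (Fin T) ℝ).det = ∏ i, (1 + l i / a)) ∧
      ((K + a • (1 : Matrix (Fin T) (Fin T) ℝ)) * M = 1) ∧
      (M.trace = ∑ i, (a + l i)⁻¹) := by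
  classical
  have hH := hK.1
  set U : Matrix (Fin T) (Fin T) ℝ := (hH.eigenvectorUnitary : Matrix (Fin T) (Fin T) ℝ) with hU
  set l : Fin T → ℝ := hH.eigenvalues with hl
  have hUV : U * star U = 1 := (Matrix.mem_unitaryGroup_iff).mp hH.eigenvectorUnitary.2
  have hVU : star U * U = 1 := (Matrix.mem_unitaryGroup_iff').mp hH.eigenvectorUnitary.2
  have hspec : K = U * diagonal l * star U := by
    have := hH.spectral_theorem
    simpa using this
  have hal : ∀ i, a + l i ≠ 0 := fun i => by
    have := hK.eigenvalues_nonneg i; positivity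
  refine ⟨l, U * diagonal (fun i => (a + l i)⁻¹) * star U,
    fun i => hK.eigenvalues_nonneg i, ?_, ?_, ?_, ?_⟩
  · -- trace
    rw [hspec, Matrix.trace_mul_cycle, hVU, one_mul, Matrix.trace_diagonal]
  · -- det
    have key : (1 + a⁻¹ • K : Matrix (Fin T) (Fin T) ℝ)
        = U * diagonal (fun i => 1 + l i / a) * star U := by
      have : diagonal (fun i => 1 + l i / a)
          = (1 : Matrix (Fin T) (Fin T) ℝ) + a⁻¹ • diagonal l := by
        ext i j
        rcases eq_or_ne i j with rfl | hij
        · simp [Matrix.one_apply, div_eq_inv_mul]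
        · simp [Matrix.diagonal_apply_ne _ hij, Matrix.one_apply_ne hij]
      rw [this, Matrix.mul_add, Matrix.add_mul, Matrix.mul_one, hUV,
        Matrix.mul_smul, Matrix.smul_mul, hspec]
    rw [key, Matrix.det_mul, Matrix.det_mul, mul_comm, ← mul_assoc,
      ← Matrix.det_mul, ← Matrix.det_mul]
    rw [show star U * U * diagonal (fun i => 1 + l i / a)
      = diagonal (fun i => 1 + l i / a) by rw [hVU, one_mul]]
    rw [Matrix.det_diagonal]
  · -- inverse identity
    have hKa : K + a • (1 : Matrix (Fin T) (Fin T) ℝ)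
        = U * diagonal (fun i => a + l i) * star U := by
      have : diagonal (fun i => a + l i)
          = a • (1 : Matrix (Fin T) (Fin T) ℝ) + diagonal l := by
        ext i j
        rcases eq_or_ne i j with rfl | hij
        · simp [Matrix.one_apply]
        · simp [Matrix.diagonal_apply_ne _ hij, Matrix.one_apply_ne hij]
      rw [this, Matrix.mul_add, Matrix.add_mul, hspec]
      rw [Matrix.mul_smul, Matrix.smul_mul, Matrix.mul_one, hUV]
      abel
    rw [hKa]
    calc (U * diagonal (fun i => a + l i) * star U)
          * (U * diagonal (fun i => (a + l i)⁻¹) * star U)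
        = U * (diagonal (fun i => a + l i)
            * ((star U * U) * (diagonal (fun i => (a + l i)⁻¹) * star U))) := by
          simp only [Matrix.mul_assoc]
      _ = 1 := by
          rw [hVU, one_mul, ← Matrix.mul_assoc (diagonal _), Matrix.diagonal_mul_diagonal]
          rw [show (fun i => (a + l i) * (a + l i)⁻¹) = fun _ => (1:ℝ) by
            funext i; exact mul_inv_cancel₀ (hal i)]
          rw [Matrix.diagonal_one, Matrix.one_mul, hUV]
  · -- trace of inverse
    rw [Matrix.trace_mul_cycle, hVU, one_mul, Matrix.trace_diagonal]

lemma pen_le (T : ℕ) (K : Matrix (Fin T) (Fin T) ℝ) (hK : K.PosSemidef)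
    (a : ℝ) (ha : 0 < a) (M : Matrix (Fin T) (Fin T) ℝ)
    (hMK : (K + a • (1 : Matrix (Fin T) (Fin T) ℝ)) * M = 1) (y : Fin T → ℝ) :
    (⨅ α : Fin T → ℝ,
        ((y - K.mulVec α) ⬝ᵥ (y - K.mulVec α) + a * (α ⬝ᵥ K.mulVec α)))
      ≤ a * ((M *ᵥ y) ⬝ᵥ y) := by
  have hbdd : BddBelow (Set.range fun α : Fin T → ℝ =>
      ((y - K.mulVec α) ⬝ᵥ (y - K.mulVec α) + a * (α ⬝ᵥ K.mulVec α))) := by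
    refine ⟨0, ?_⟩
    rintro x ⟨α, rfl⟩
    have h1 : 0 ≤ (y - K.mulVec α) ⬝ᵥ (y - K.mulVec α) := by
      rw [dotProduct]
      exact Finset.sum_nonneg fun i _ => mul_self_nonneg _
    have h2 : 0 ≤ α ⬝ᵥ K.mulVec α := by
      have := hK.dotProduct_mulVec_nonneg α
      simpa using this
    have := mul_nonneg ha.le h2
    positivity
  set α₀ : Fin T → ℝ := M *ᵥ y with hα₀
  have hKy : (K + a • (1 : Matrix (Fin T) (Fin T) ℝ)) *ᵥ α₀ = y := by
    rw [hα₀, Matrix.mulVec_mulVec, hMK, Matrix.one_mulVec]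
  have hKα : K *ᵥ α₀ = y - a • α₀ := by
    have : K *ᵥ α₀ + a • α₀ = y := by
      rw [← hKy, Matrix.add_mulVec, smul_mulVec, Matrix.one_mulVec]
    linear_combination (norm := module) this
  have hval : ((y - K.mulVec α₀) ⬝ᵥ (y - K.mulVec α₀) + a * (α₀ ⬝ᵥ K.mulVec α₀))
      = a * (α₀ ⬝ᵥ y) := by
    rw [hKα]
    have h1 : y - (y - a • α₀) = a • α₀ := by module
    rw [h1, smul_dotProduct, dotProduct_smul, dotProduct_sub,
      dotProduct_smul]
    simp only [smul_eq_mul]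
    ring
  calc (⨅ α : Fin T → ℝ, ((y - K.mulVec α) ⬝ᵥ (y - K.mulVec α) + a * (α ⬝ᵥ K.mulVec α)))
      ≤ ((y - K.mulVec α₀) ⬝ᵥ (y - K.mulVec α₀) + a * (α₀ ⬝ᵥ K.mulVec α₀)) :=
        ciInf_le hbdd α₀
    _ = a * ((M *ᵥ y) ⬝ᵥ y) := by rw [hval]

/-- Theorem 5 (lower bound on penalized regret for online kernel regression,
matrix/strategy form): for any measurable prediction strategy `σ` (the prediction at
round `t` being `σ t (y 1, …, y (t-1))`), there is a label sequence `y` with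
`|y i| ≤ B = √(6 (1 + κ²/a) log T)` whose penalized regret is at least
`log det (I + a⁻¹ K) + 2 log (1 - 1/T)`. -/
theorem penalized_regret_lower_bound (T : ℕ) (hT : 2 ≤ T)
    (K : Matrix (Fin T) (Fin T) ℝ) (hK : K.PosSemidef) (a : ℝ) (ha : 0 < a)
    (κ2 : ℝ) (hκ2 : κ2 = ⨆ i, K i i)
    (B : ℝ) (hB : B = Real.sqrt (6 * (1 + κ2 / a) * Real.log T))
    (σ : ∀ t : Fin T, (Fin (t : ℕ) → ℝ) → ℝ)
    (hσ : ∀ t, Measurable (σ t)) :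
    ∃ y : Fin T → ℝ, (∀ i, |y i| ≤ B) ∧
      Real.log ((1 + a⁻¹ • K : Matrix (Fin T) (Fin T) ℝ).det) +
          2 * Real.log (1 - 1 / (T : ℝ)) ≤
        (∑ t : Fin T, (σ t (fun i => y (Fin.castLE t.isLt.le i)) - y t) ^ 2) -
          ⨅ α : Fin T → ℝ,
            ((y - K.mulVec α) ⬝ᵥ (y - K.mulVec α) + a * (α ⬝ᵥ K.mulVec α)) := by
  classical
  have hT0 : 0 < T := by omega
  have hTR : (2:ℝ) ≤ (T:ℝ) := by exact_mod_cast hT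
  have hdiag : ∀ i, 0 ≤ K i i := by
    intro i
    exact hK.diag_nonneg
  have hKii : ∀ i, K i i ≤ κ2 := by
    intro i; rw [hκ2]
    exact le_ciSup (Set.Finite.bddAbove (Set.finite_range fun j => K j j)) i
  have hκ0 : 0 ≤ κ2 := le_trans (hdiag ⟨0, hT0⟩) (hKii ⟨0, hT0⟩)
  have hB0 : 0 ≤ B := hB ▸ Real.sqrt_nonneg _
  have hlogT0 : 0 ≤ Real.log T := Real.log_nonneg (by linarith)
  have hB2 : B ^ 2 = 6 * (1 + κ2 / a) * Real.log T := by
    rw [hB, Real.sq_sqrt (by positivity)]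
  obtain ⟨l, M, hl0, hlsum, hdet, hMK, hMtr⟩ := spectral_pack T K hK a ha
  have hltop : ∀ i, l i ≤ (T:ℝ) * ((κ2 / a) * a) := by
    intro i
    have h1 : l i ≤ ∑ j, l j :=
      Finset.single_le_sum (fun j _ => hl0 j) (Finset.mem_univ i)
    have h2 : K.trace ≤ (T:ℝ) * κ2 := by
      rw [Matrix.trace]
      calc ∑ i, K.diag i ≤ ∑ _i : Fin T, κ2 :=
            Finset.sum_le_sum (fun i _ => hKii i)
        _ = (T:ℝ) * κ2 := by
            rw [Finset.sum_const, Finset.card_univ, Fintype.card_fin, nsmul_eq_mul]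
    rw [div_mul_cancel₀ _ (ne_of_gt ha)]
    rw [hlsum] at h1
    linarith
  have hlogdet : Real.log ((1 + a⁻¹ • K : Matrix (Fin T) (Fin T) ℝ).det)
      = ∑ i, Real.log (1 + l i / a) := by
    rw [hdet, Real.log_prod]
    intro i _
    have := hl0 i
    positivity
  have hal : ∀ i, (0:ℝ) < a + l i := fun i => by have := hl0 i; linarith
  have hlog_le : Real.log ((1 + a⁻¹ • K : Matrix (Fin T) (Fin T) ℝ).det)
      ≤ B ^ 2 * ((T:ℝ) - a * M.trace) := by
    rw [hlogdet]
    have hstep : ∀ i, Real.log (1 + l i / a) ≤ B ^ 2 * (l i / (a + l i)) := by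
      intro i
      rw [hB2]
      exact log_le_key T hT a ha (κ2 / a) (by positivity) (l i) (hl0 i) (hltop i)
    calc ∑ i, Real.log (1 + l i / a) ≤ ∑ i, B ^ 2 * (l i / (a + l i)) :=
          Finset.sum_le_sum (fun i _ => hstep i)
      _ = B ^ 2 * ((T:ℝ) - a * M.trace) := by
          rw [hMtr]
          have hpt : ∀ i, B ^ 2 * (l i / (a + l i))
              = B ^ 2 - B ^ 2 * a * (a + l i)⁻¹ := by
            intro i
            have h := (hal i).ne'
            field_simp
            ring
          rw [Finset.sum_congr rfl (fun i _ => hpt i), Finset.sum_sub_distrib,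
            Finset.sum_const, Finset.card_univ, Fintype.card_fin, nsmul_eq_mul,
            ← Finset.mul_sum, Finset.mul_sum, ← Finset.mul_sum]
          ring
  -- expectation over sign vectors
  set N : ℝ := (Fintype.card (Fin T → Bool) : ℝ) with hN
  have hN0 : (0:ℝ) < N := by
    rw [hN]; exact_mod_cast Fintype.card_pos
  set L : ℝ := Real.log ((1 + a⁻¹ • K : Matrix (Fin T) (Fin T) ℝ).det) with hL
  set loss : (Fin T → ℝ) → ℝ := fun y =>
    ∑ t : Fin T, (σ t (fun i => y (Fin.castLE t.isLt.le i)) - y t) ^ 2 with hloss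
  set pen : (Fin T → ℝ) → ℝ := fun y =>
    ⨅ α : Fin T → ℝ,
      ((y - K.mulVec α) ⬝ᵥ (y - K.mulVec α) + a * (α ⬝ᵥ K.mulVec α)) with hpen
  have hsum_loss : N * ((T:ℝ) * B ^ 2) ≤ ∑ s : Fin T → Bool, loss (ys B s) :=
    sum_loss_ge B hB0 σ
  have hsum_pen : ∑ s : Fin T → Bool, pen (ys B s) ≤ N * (a * (B ^ 2 * M.trace)) := by
    calc ∑ s : Fin T → Bool, pen (ys B s)
        ≤ ∑ s : Fin T → Bool, a * ((M *ᵥ ys B s) ⬝ᵥ ys B s) :=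
          Finset.sum_le_sum (fun s _ => pen_le T K hK a ha M hMK (ys B s))
      _ = a * ∑ s : Fin T → Bool, (M *ᵥ ys B s) ⬝ᵥ ys B s := by rw [Finset.mul_sum]
      _ = N * (a * (B ^ 2 * M.trace)) := by rw [sum_quad]; ring
  have hmain : ∑ s : Fin T → Bool, L ≤ ∑ s : Fin T → Bool, (loss (ys B s) - pen (ys B s)) := by
    rw [Finset.sum_const, Finset.card_univ, nsmul_eq_mul, Finset.sum_sub_distrib]
    have h1 : N * L ≤ N * (B ^ 2 * ((T:ℝ) - a * M.trace)) :=
      mul_le_mul_of_nonneg_left hlog_le hN0.le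
    have h2 : N * (B ^ 2 * ((T:ℝ) - a * M.trace))
        = N * ((T:ℝ) * B ^ 2) - N * (a * (B ^ 2 * M.trace)) := by ring
    rw [← hN]
    linarith
  obtain ⟨s, _, hs⟩ := Finset.exists_le_of_sum_le Finset.univ_nonempty hmain
  refine ⟨ys B s, ?_, ?_⟩
  · intro i
    rcases h : s i with _ | _ <;> simp [ys, h, abs_of_nonneg hB0]
  · have hlog1 : Real.log (1 - 1 / (T:ℝ)) ≤ 0 := by
      apply Real.log_nonpos
      · have : (1:ℝ) / T ≤ 1 := by
          rw [div_le_one (by linarith)]; linarith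
        linarith
      · linarith [show (0:ℝ) ≤ 1 / (T:ℝ) by positivity]
    have h2 : loss (ys B s) - pen (ys B s)
        = (∑ t : Fin T, (σ t (fun i => ys B s (Fin.castLE t.isLt.le i)) - ys B s t) ^ 2) -
          ⨅ α : Fin T → ℝ,
            ((ys B s - K.mulVec α) ⬝ᵥ (ys B s - K.mulVec α) + a * (α ⬝ᵥ K.mulVec α)) := rfl
    rw [← h2]
    linarith
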